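/- For every k ≥ 1, f(k+1)/2 = ⌊(2^{k+1}−1)/3⌋, i.e., the number of edges added by the algorithm on a complete binary tree with n = 2^{k+1}−1 vertices equals ⌊n/3⌋. -/

import Mathlib

def addedEdges : ℕ → ℕ
  | 0 => 0
  | 1 => 0
  | k + 2 => 2 * (k + 1) + 2 * ∑ i ∈ (Finset.range (k + 1)).attach,
      addedEdges i.1
  decreasing_by
    have h := Finset.mem_range.mp i.2
    omega

lemma addedEdges_succ_succ (k : ℕ) :
    addedEdges (k + 2) = 2 * (k + 1) + 2 * ∑ i ∈ Finset.range (k + 1), addedEdges i := by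
  rw [addedEdges, ← Finset.sum_attach (Finset.range (k + 1)) addedEdges]

lemma addedEdges_rec (k : ℕ) :
    addedEdges (k + 2) = addedEdges (k + 1) + 2 * addedEdges k + 2 := by
  cases k with
  | zero => simp [addedEdges_succ_succ, addedEdges]
  | succ n =>
    rw [addedEdges_succ_succ, addedEdges_succ_succ, Finset.sum_range_succ]
    ring

lemma addedEdges_key (k : ℕ) :
    3 * addedEdges k + 2 * (k % 2) + 2 = 2 ^ (k + 1) := by
  induction k using Nat.strong_induction_on with
  | _ k ih =>
    match k with
    | 0 => simp [addedEdges]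
    | 1 => simp [addedEdges]
    | n + 2 =>
      have h1 := ih (n + 1) (by omega)
      have h2 := ih n (by omega)
      rw [addedEdges_rec]
      have : (2:ℕ) ^ (n + 3) = 2 * 2 ^ (n + 2) := by ring
      have : (2:ℕ) ^ (n + 2) = 2 * 2 ^ (n + 1) := by ring
      omega

lemma pow_two_mod_three (m : ℕ) : 2 ^ m % 3 = 1 + m % 2 := by
  obtain ⟨t, rfl | rfl⟩ := Nat.even_or_odd' m
  · have h4 : (4:ℕ) ^ t % 3 = 1 := by rw [Nat.pow_mod]; simp
    have : (2:ℕ) ^ (2 * t) = 4 ^ t := by rw [pow_mul]; norm_num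
    omega
  · have h4 : (4:ℕ) ^ t % 3 = 1 := by rw [Nat.pow_mod]; simp
    have : (2:ℕ) ^ (2 * t + 1) = 2 * 4 ^ t := by rw [pow_succ, pow_mul]; ring_nf
    omega

theorem addedEdges_floor (k : ℕ) (hk : 1 ≤ k) :
    addedEdges (k + 1) / 2 = (2 ^ (k + 1) - 1) / 3 := by
  have h1 := addedEdges_key (k + 1)
  have h2 := pow_two_mod_three (k + 1)
  have h3 : (2:ℕ) ^ (k + 2) = 2 * 2 ^ (k + 1) := by ring
  omega
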